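/- Let G be a group, A an abelian normal subgroup of G, and T = t_1A ∪ ⋯ ∪ t_nA ∪ A a union of cosets where t_1, …, t_n ∈ G commute with each other. If, as endomorphisms of A (via conjugation), the t_i satisfy (t_i − 1)^c = 0 for all i = 1, …, n, and (t_i − 1)(t_it_j − 1)^{c−1} = 0 for all 1 ≤ i ≠ j ≤ n, then the subset T satisfies the Malcev law M_c(x,y). -/

import Mathlib

open Pointwise
open scoped IsMulCommutative

/-- Malcev word pair `(α_c, β_c)`. -/
def malcevPair {G : Type*} [Monoid G] (c : ℕ) (x y : G) : G × G :=
  Nat.rec (x, y) (fun _ p => (p.1 * p.2, p.2 * p.1)) c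

/-- The Malcev word `α_c(x,y)`. -/
def malcevAlpha {G : Type*} [Monoid G] (c : ℕ) (x y : G) : G := (malcevPair c x y).1

/-- The Malcev word `β_c(x,y)`. -/
def malcevBeta {G : Type*} [Monoid G] (c : ℕ) (x y : G) : G := (malcevPair c x y).2

/-- The evaluation of `f_c(X,Y) = (X-1)·∏_{i=0}^{c-2}(X^{2^i}Y^{2^i}-1)` at two
elements of a (possibly noncommutative) ring. -/
def fEval {R : Type*} [Ring R] (c : ℕ) (t u : R) : R :=
  (t - 1) * ((List.range (c - 1)).map fun i => t ^ 2 ^ i * u ^ 2 ^ i - 1).prod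

/-- The endomorphism of the abelian normal subgroup `A` (written additively)
induced by conjugation by `t`, i.e. `a ↦ a^t = t⁻¹ * a * t`. -/
def conjEnd {G : Type*} [Group G] (A : Subgroup G) [hN : A.Normal] [IsMulCommutative A]
    (t : G) : AddMonoid.End (Additive A) :=
  AddMonoidHom.mk'
    (fun a => Additive.ofMul (⟨t⁻¹ * ((Additive.toMul a : A) : G) * t, by
      simpa using hN.conj_mem _ (Additive.toMul a).2 t⁻¹⟩ : A))
    (fun a b => congrArg Additive.ofMul (Subtype.ext (by
      show t⁻¹ * ((Additive.toMul a * Additive.toMul b : A) : G) * t = _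
      simp only [toMul_ofMul, Subgroup.coe_mul]
      group)))


section Aux

variable {G : Type*} [Group G] (A : Subgroup G) [A.Normal] [IsMulCommutative A]

lemma toMul_conjEnd_coe (g : G) (v : Additive A) :
    ((Additive.toMul (conjEnd A g v) : A) : G) = g⁻¹ * ((Additive.toMul v : A) : G) * g := rfl

lemma additive_ext {u v : Additive A}
    (h : ((Additive.toMul u : A) : G) = ((Additive.toMul v : A) : G)) : u = v :=
  Additive.toMul.injective (Subtype.ext h)

lemma conjEnd_one : conjEnd A (1 : G) = 1 := by
  apply AddMonoid.End.ext; intro v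
  apply additive_ext A
  rw [toMul_conjEnd_coe]
  show (1 : G)⁻¹ * ((Additive.toMul v : A) : G) * 1 = ((Additive.toMul v : A) : G)
  group

lemma conjEnd_mul (g h : G) : conjEnd A (g * h) = conjEnd A h * conjEnd A g := by
  apply AddMonoid.End.ext; intro v
  apply additive_ext A
  show _ = ((Additive.toMul ((conjEnd A h) ((conjEnd A g) v)) : A) : G)
  rw [toMul_conjEnd_coe, toMul_conjEnd_coe, toMul_conjEnd_coe]
  group

lemma conjEnd_pow (g : G) (m : ℕ) : conjEnd A (g ^ m) = conjEnd A g ^ m := by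
  induction m with
  | zero => rw [pow_zero, pow_zero, conjEnd_one]
  | succ m ih => rw [pow_succ, conjEnd_mul, ih, pow_succ']

lemma conjEnd_commute (g h : G) (hgh : Commute g h) :
    Commute (conjEnd A g) (conjEnd A h) := by
  have := (conjEnd_mul A g h).symm.trans (by rw [hgh.eq] : conjEnd A (g * h) = conjEnd A (h * g))
  rw [conjEnd_mul] at this
  exact this.symm

lemma coe_mul_comm (g : G) (a : A) :
    (a : G) * g = g * ((Additive.toMul (conjEnd A g (Additive.ofMul a)) : A) : G) := by
  show (a : G) * g = g * (g⁻¹ * (a : G) * g)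
  group

lemma coe_mul_comm' (g : G) (v : Additive A) :
    ((Additive.toMul v : A) : G) * g
      = g * ((Additive.toMul (conjEnd A g v) : A) : G) := by
  show _ * g = g * (g⁻¹ * _ * g)
  group

lemma coe_toMul_add (u v : Additive A) :
    ((Additive.toMul (u + v) : A) : G)
      = ((Additive.toMul u : A) : G) * ((Additive.toMul v : A) : G) := rfl

lemma endSub_apply {M : Type*} [AddCommGroup M] (f g : AddMonoid.End M) (x : M) :
    (f - g) x = f x - g x := rfl

end Aux

lemma malcevAlpha_succ {G : Type*} [Monoid G] (k : ℕ) (x y : G) :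
    malcevAlpha (k + 1) x y = malcevAlpha k x y * malcevBeta k x y := rfl

lemma malcevBeta_succ {G : Type*} [Monoid G] (k : ℕ) (x y : G) :
    malcevBeta (k + 1) x y = malcevBeta k x y * malcevAlpha k x y := rfl

lemma prod_factor {R : Type*} [Ring R] (d : R) (m : ℕ) :
    ∃ q : R, (∀ r : R, Commute r d → Commute r q) ∧
      ((List.range m).map fun i => d ^ 2 ^ i - 1).prod = (d - 1) ^ m * q := by
  induction m with
  | zero => exact ⟨1, fun r _ => Commute.one_right r, by simp⟩
  | succ m ih =>
    obtain ⟨q, hq, hP⟩ := ih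
    set g : R := ∑ j ∈ Finset.range (2 ^ m), d ^ j with hg
    refine ⟨q * g, ?_, ?_⟩
    · intro r hr
      exact (hq r hr).mul_right (Commute.sum_right _ _ _ fun j _ => hr.pow_right j)
    · have hd1q : Commute (d - 1) q := hq (d - 1) ((Commute.refl d).sub_left (Commute.one_left d))
      have hd1g : Commute (d - 1) g :=
        Commute.sum_right _ _ _ fun j _ => ((Commute.refl d).sub_left (Commute.one_left d)).pow_right j
      rw [List.range_succ, List.map_append, List.prod_append, List.map_singleton,
        List.prod_singleton, hP, ← geom_sum_mul d (2 ^ m), ← hg]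
      calc (d - 1) ^ m * q * (g * (d - 1))
          = (d - 1) ^ m * (q * g * (d - 1)) := by rw [mul_assoc, mul_assoc]
        _ = (d - 1) ^ m * ((d - 1) * (q * g)) := by rw [← (hd1q.mul_right hd1g).eq]
        _ = (d - 1) ^ (m + 1) * (q * g) := by rw [← mul_assoc, ← pow_succ]

lemma sq_fac {R : Type*} [Ring R] (T : R) : T * T - 1 = (T + 1) * (T - 1) := by noncomm_ring

section Main

variable {G : Type*} [Group G] (A : Subgroup G) [A.Normal] [IsMulCommutative A]

lemma malcev_decomp (s s' : G) (hss' : Commute s s') (a b : A) (m : ℕ) :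
    ∃ vα vβ : Additive A,
      malcevAlpha (m + 1) (s * a) (s' * b) = (s * s') ^ 2 ^ m * ((Additive.toMul vα : A) : G) ∧
      malcevBeta (m + 1) (s * a) (s' * b) = (s * s') ^ 2 ^ m * ((Additive.toMul vβ : A) : G) ∧
      vα - vβ = ((((List.range m).map fun i => conjEnd A (s * s') ^ 2 ^ i - 1).prod :
            AddMonoid.End (Additive A)))
          ((conjEnd A s' (Additive.ofMul a) + Additive.ofMul b)
            - (conjEnd A s (Additive.ofMul b) + Additive.ofMul a)) := by
  induction m with
  | zero =>
    refine ⟨conjEnd A s' (Additive.ofMul a) + Additive.ofMul b,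
            conjEnd A s (Additive.ofMul b) + Additive.ofMul a, ?_, ?_, by simp⟩
    · show (s * (a : G)) * (s' * (b : G)) = _
      rw [pow_zero, pow_one, coe_toMul_add]
      simp only [toMul_ofMul]
      calc s * (a : G) * (s' * (b : G))
          = s * ((a : G) * s') * (b : G) := by group
        _ = s * (s' * ((Additive.toMul (conjEnd A s' (Additive.ofMul a)) : A) : G)) * (b : G) := by
            rw [coe_mul_comm]
        _ = s * s' * (((Additive.toMul (conjEnd A s' (Additive.ofMul a)) : A) : G)
              * ((b : A) : G)) := by group
    · show (s' * (b : G)) * (s * (a : G)) = _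
      rw [pow_zero, pow_one, coe_toMul_add]
      simp only [toMul_ofMul]
      calc s' * (b : G) * (s * (a : G))
          = s' * ((b : G) * s) * (a : G) := by group
        _ = s' * (s * ((Additive.toMul (conjEnd A s (Additive.ofMul b)) : A) : G)) * (a : G) := by
            rw [coe_mul_comm]
        _ = s' * s * (((Additive.toMul (conjEnd A s (Additive.ofMul b)) : A) : G)
              * ((a : A) : G)) := by group
        _ = s * s' * (((Additive.toMul (conjEnd A s (Additive.ofMul b)) : A) : G)
              * ((a : A) : G)) := by rw [hss'.eq]
  | succ m ih =>
    obtain ⟨vα, vβ, hA, hB, hd⟩ := ih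
    set w : G := (s * s') ^ 2 ^ m with hw
    have hpow : w * w = (s * s') ^ 2 ^ (m + 1) := by
      rw [hw, ← pow_add]
      congr 1
      ring
    refine ⟨conjEnd A w vα + vβ, conjEnd A w vβ + vα, ?_, ?_, ?_⟩
    · rw [malcevAlpha_succ, hA, hB, coe_toMul_add]
      calc w * ((Additive.toMul vα : A) : G) * (w * ((Additive.toMul vβ : A) : G))
          = w * (((Additive.toMul vα : A) : G) * w) * ((Additive.toMul vβ : A) : G) := by group
        _ = w * (w * ((Additive.toMul (conjEnd A w vα) : A) : G))
              * ((Additive.toMul vβ : A) : G) := by rw [coe_mul_comm']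
        _ = w * w * (((Additive.toMul (conjEnd A w vα) : A) : G)
              * ((Additive.toMul vβ : A) : G)) := by group
        _ = (s * s') ^ 2 ^ (m + 1) * (((Additive.toMul (conjEnd A w vα) : A) : G)
              * ((Additive.toMul vβ : A) : G)) := by rw [hpow]
    · rw [malcevBeta_succ, hA, hB, coe_toMul_add]
      calc w * ((Additive.toMul vβ : A) : G) * (w * ((Additive.toMul vα : A) : G))
          = w * (((Additive.toMul vβ : A) : G) * w) * ((Additive.toMul vα : A) : G) := by group
        _ = w * (w * ((Additive.toMul (conjEnd A w vβ) : A) : G))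
              * ((Additive.toMul vα : A) : G) := by rw [coe_mul_comm']
        _ = w * w * (((Additive.toMul (conjEnd A w vβ) : A) : G)
              * ((Additive.toMul vα : A) : G)) := by group
        _ = (s * s') ^ 2 ^ (m + 1) * (((Additive.toMul (conjEnd A w vβ) : A) : G)
              * ((Additive.toMul vα : A) : G)) := by rw [hpow]
    · have hcw : conjEnd A w = conjEnd A (s * s') ^ 2 ^ m := conjEnd_pow A (s * s') (2 ^ m)
      set D : AddMonoid.End (Additive A) := conjEnd A (s * s') with hD
      set P : AddMonoid.End (Additive A) :=
        (((List.range m).map fun i => D ^ 2 ^ i - 1).prod : AddMonoid.End (Additive A)) with hP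
      set u : Additive A := (conjEnd A s' (Additive.ofMul a) + Additive.ofMul b)
            - (conjEnd A s (Additive.ofMul b) + Additive.ofMul a) with hu
      have hPsucc : (((List.range (m + 1)).map fun i => D ^ 2 ^ i - 1).prod :
          AddMonoid.End (Additive A)) = P * (D ^ 2 ^ m - 1) := by
        rw [List.range_succ, List.map_append, List.prod_append, List.map_singleton,
          List.prod_singleton, hP]
      have hcP : Commute (D ^ 2 ^ m - 1) P := by
        rw [hP]
        apply Commute.list_prod_right
        intro x hx
        simp only [List.mem_map, List.mem_range] at hx
        obtain ⟨i, _, rfl⟩ := hx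
        exact (((Commute.refl D).pow_pow _ _).sub_left (Commute.one_left _)).sub_right
          (Commute.one_right _)
      have happ : (((D ^ 2 ^ m - 1) * P : AddMonoid.End (Additive A))) u
          = ((D ^ 2 ^ m - 1 : AddMonoid.End (Additive A))) (vα - vβ) := by
        rw [hd]; rfl
      rw [hPsucc, ← hcP.eq, happ, hcw, endSub_apply, map_sub,
        AddMonoid.End.one_apply]
      abel

lemma key_vanish (c n : ℕ) (hc : 1 ≤ c) (t : Fin n → G)
    (hcomm : ∀ i j, Commute (t i) (t j))
    (h1 : ∀ i, (conjEnd A (t i) - 1) ^ c = 0)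
    (h2 : ∀ i j, i ≠ j →
      (conjEnd A (t i) - 1) * (conjEnd A (t i) * conjEnd A (t j) - 1) ^ (c - 1) = 0)
    (s s' : G) (hs : s = 1 ∨ ∃ i, s = t i) (hs' : s' = 1 ∨ ∃ j, s' = t j) :
    (conjEnd A s - 1) * (conjEnd A s' * conjEnd A s - 1) ^ (c - 1) = 0 := by
  have hc1 : c - 1 + 1 = c := Nat.sub_add_cancel hc
  rcases hs with rfl | ⟨i, rfl⟩
  · rw [conjEnd_one, sub_self, zero_mul]
  · rcases hs' with rfl | ⟨j, rfl⟩
    · rw [conjEnd_one, one_mul, ← pow_succ', hc1]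
      exact h1 i
    · by_cases hij : i = j
      · subst hij
        have hcomm1 : Commute (conjEnd A (t i) + 1) (conjEnd A (t i) - 1) :=
          ((Commute.refl _).add_left (Commute.one_left _)).sub_right (Commute.one_right _)
        rw [sq_fac, hcomm1.mul_pow]
        have hcomm2 : Commute (conjEnd A (t i) - 1) ((conjEnd A (t i) + 1) ^ (c - 1)) :=
          (hcomm1.symm).pow_right _
        rw [← mul_assoc, hcomm2.eq, mul_assoc, ← pow_succ', hc1, h1 i, mul_zero]
      · rw [← (conjEnd_commute A (t i) (t j) (hcomm i j)).eq]
        exact h2 i j hij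

end Main

theorem malcev_law_on_union_of_cosets
    {G : Type*} [Group G] (A : Subgroup G) [A.Normal] [IsMulCommutative A]
    (c n : ℕ) (hc : 1 ≤ c) (t : Fin n → G)
    (hcomm : ∀ i j, Commute (t i) (t j))
    (h1 : ∀ i, (conjEnd A (t i) - 1) ^ c = 0)
    (h2 : ∀ i j, i ≠ j →
      (conjEnd A (t i) - 1) * (conjEnd A (t i) * conjEnd A (t j) - 1) ^ (c - 1) = 0) :
    ∀ x ∈ (⋃ i, t i • (A : Set G)) ∪ (A : Set G),
      ∀ y ∈ (⋃ i, t i • (A : Set G)) ∪ (A : Set G),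
        malcevAlpha c x y = malcevBeta c x y := by
  have hdec : ∀ z ∈ (⋃ i, t i • (A : Set G)) ∪ (A : Set G),
      ∃ s : G, (s = 1 ∨ ∃ i, s = t i) ∧ ∃ a : A, z = s * a := by
    intro z hz
    rcases hz with hz | hz
    · rw [Set.mem_iUnion] at hz
      obtain ⟨i, hz⟩ := hz
      rw [Set.mem_smul_set] at hz
      obtain ⟨a, ha, rfl⟩ := hz
      exact ⟨t i, Or.inr ⟨i, rfl⟩, ⟨a, ha⟩, rfl⟩
    · exact ⟨1, Or.inl rfl, ⟨z, hz⟩, (one_mul z).symm⟩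
  intro x hx y hy
  obtain ⟨s, hs, a, rfl⟩ := hdec x hx
  obtain ⟨s', hs', b, rfl⟩ := hdec y hy
  have hss' : Commute s s' := by
    rcases hs with rfl | ⟨i, rfl⟩
    · exact Commute.one_left _
    · rcases hs' with rfl | ⟨j, rfl⟩
      · exact Commute.one_right _
      · exact hcomm i j
  have hSS' : Commute (conjEnd A s) (conjEnd A s') := conjEnd_commute A s s' hss'
  have hDSS : conjEnd A (s * s') = conjEnd A s' * conjEnd A s := conjEnd_mul A s s'
  have hz1 : (conjEnd A s - 1) * (conjEnd A (s * s') - 1) ^ (c - 1) = 0 := by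
    rw [hDSS]
    exact key_vanish A c n hc t hcomm h1 h2 s s' hs hs'
  have hz2 : (conjEnd A s' - 1) * (conjEnd A (s * s') - 1) ^ (c - 1) = 0 := by
    rw [hDSS, ← hSS'.eq]
    exact key_vanish A c n hc t hcomm h1 h2 s' s hs' hs
  obtain ⟨vα, vβ, hA, hB, hDiff⟩ := malcev_decomp A s s' hss' a b (c - 1)
  rw [Nat.sub_add_cancel hc] at hA hB
  rw [hA, hB]
  suffices h : vα = vβ by rw [h]
  have hzero : vα - vβ = 0 := by
    rw [hDiff]
    obtain ⟨q, hq, hPf⟩ := prod_factor (conjEnd A (s * s')) (c - 1)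
    rw [hPf]
    set D : AddMonoid.End (Additive A) := conjEnd A (s * s') with hD
    have hSD : Commute (conjEnd A s) (conjEnd A s' * conjEnd A s) :=
      hSS'.mul_right (Commute.refl _)
    have hS'D : Commute (conjEnd A s') (conjEnd A s' * conjEnd A s) :=
      (Commute.refl _).mul_right hSS'.symm
    rw [← hDSS] at hSD hS'D
    have key : ∀ X : AddMonoid.End (Additive A), Commute X D →
        X * (D - 1) ^ (c - 1) = 0 → ((D - 1) ^ (c - 1) * q) * X = 0 := by
      intro X hX h0
      have hX1 : Commute X ((D - 1) ^ (c - 1)) :=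
        ((hX.sub_right (Commute.one_right X))).pow_right _
      have hXq : Commute X q := hq X hX
      calc (D - 1) ^ (c - 1) * q * X
          = (D - 1) ^ (c - 1) * (X * q) := by rw [mul_assoc, ← hXq.eq]
        _ = (X * (D - 1) ^ (c - 1)) * q := by rw [← mul_assoc, ← hX1.eq]
        _ = 0 := by rw [h0, zero_mul]
    have hu : (conjEnd A s' (Additive.ofMul a) + Additive.ofMul b)
          - (conjEnd A s (Additive.ofMul b) + Additive.ofMul a)
        = ((conjEnd A s' - 1 : AddMonoid.End (Additive A))) (Additive.ofMul a)
          - ((conjEnd A s - 1 : AddMonoid.End (Additive A))) (Additive.ofMul b) := by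
      rw [endSub_apply, endSub_apply, AddMonoid.End.one_apply,
        AddMonoid.End.one_apply]
      abel
    rw [hu, map_sub]
    have e1 : ((D - 1) ^ (c - 1) * q : AddMonoid.End (Additive A))
          (((conjEnd A s' - 1 : AddMonoid.End (Additive A))) (Additive.ofMul a))
        = (((D - 1) ^ (c - 1) * q) * (conjEnd A s' - 1) : AddMonoid.End (Additive A))
          (Additive.ofMul a) := rfl
    have e2 : ((D - 1) ^ (c - 1) * q : AddMonoid.End (Additive A))
          (((conjEnd A s - 1 : AddMonoid.End (Additive A))) (Additive.ofMul b))
        = (((D - 1) ^ (c - 1) * q) * (conjEnd A s - 1) : AddMonoid.End (Additive A))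
          (Additive.ofMul b) := rfl
    rw [e1, e2,
      key (conjEnd A s' - 1) (hS'D.sub_left (Commute.one_left D)) hz2,
      key (conjEnd A s - 1) (hSD.sub_left (Commute.one_left D)) hz1]
    simp
  have := sub_eq_zero.mp hzero
  exact this
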